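/- Let b ∈ ℝ^N with b ≥ 0 entrywise, β > 0, and u ∈ (ℝ^r)^N with each block u_i ≠ 0. The minimizer over z ∈ ℝ^{N×r} of (1/2)‖ |z| − b ‖² + (β/2)‖u − z‖_F², where |z|_i = ‖z_i‖ (row norms), is given rowwise by z_i = (u_i/‖u_i‖)·(b_i + β‖u_i‖)/(1+β). -/

import Mathlib

lemma row_min {r : ℕ} (b β : ℝ) (hb : 0 ≤ b) (hβ : 0 < β)
    (u z : EuclideanSpace ℝ (Fin r)) (hu : u ≠ 0) :
    (1 / 2) * (‖((b + β * ‖u‖) / (1 + β)) • (‖u‖⁻¹ • u)‖ - b) ^ 2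
      + (β / 2) * ‖u - ((b + β * ‖u‖) / (1 + β)) • (‖u‖⁻¹ • u)‖ ^ 2
    ≤ (1 / 2) * (‖z‖ - b) ^ 2 + (β / 2) * ‖u - z‖ ^ 2 := by
  have ha : 0 < ‖u‖ := norm_pos_iff.mpr hu
  set a := ‖u‖ with ha'
  set t := (b + β * a) / (1 + β) with ht'
  have h1β : 0 < 1 + β := by linarith
  have ht0 : 0 ≤ t := div_nonneg (by nlinarith [ha.le]) h1β.le
  have hw : ((b + β * a) / (1 + β)) • (‖u‖⁻¹ • u) = (t / a) • u := by
    have h : t / a = ((b + β * a) / (1 + β)) * ‖u‖⁻¹ := by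
      rw [ht', ha', div_eq_mul_inv]
    rw [smul_smul, h]
  have hnw : ‖(t / a) • u‖ = t := by
    rw [norm_smul, Real.norm_eq_abs, abs_of_nonneg (div_nonneg ht0 ha.le), ← ha']
    field_simp
  have hnuw : ‖u - (t / a) • u‖ = |a - t| := by
    have : u - (t / a) • u = (1 - t / a) • u := by
      rw [sub_smul, one_smul]
    have h : (1 - t / a) * a = a - t := by field_simp
    rw [this, norm_smul, Real.norm_eq_abs, ← ha',
      show |1 - t / a| * a = |(1 - t / a) * a| from by rw [abs_mul, abs_of_pos ha], h]
  rw [hw, hnw, hnuw]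
  have key : |a - ‖z‖| ≤ ‖u - z‖ := by
    have := abs_norm_sub_norm_le u z; rwa [← ha'] at this
  have h2 : (a - ‖z‖) ^ 2 ≤ ‖u - z‖ ^ 2 := by
    calc (a - ‖z‖) ^ 2 = |a - ‖z‖| ^ 2 := (sq_abs _).symm
    _ ≤ ‖u - z‖ ^ 2 := by apply pow_le_pow_left₀ (abs_nonneg _) key
  have habs : |a - t| ^ 2 = (a - t) ^ 2 := sq_abs _
  rw [habs]
  have hteq : (1 + β) * t = b + β * a := by rw [ht']; field_simp [h1β.ne']
  have hkey : (1 + β) * t * (‖z‖ - t) = (b + β * a) * (‖z‖ - t) := by rw [hteq]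
  nlinarith [sq_nonneg (‖z‖ - t), h2, hkey, hβ.le]

theorem stmt13 {N r : ℕ} (b : Fin N → ℝ) (hb : ∀ i, 0 ≤ b i) (β : ℝ) (hβ : 0 < β)
    (u : Fin N → EuclideanSpace ℝ (Fin r)) (hu : ∀ i, u i ≠ 0) :
    ∀ z : Fin N → EuclideanSpace ℝ (Fin r),
      (1 / 2) * ∑ i, (‖((b i + β * ‖u i‖) / (1 + β)) • (‖u i‖⁻¹ • u i)‖ - b i) ^ 2
        + (β / 2) * ∑ i, ‖u i - ((b i + β * ‖u i‖) / (1 + β)) • (‖u i‖⁻¹ • u i)‖ ^ 2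
      ≤ (1 / 2) * ∑ i, (‖z i‖ - b i) ^ 2 + (β / 2) * ∑ i, ‖u i - z i‖ ^ 2 := by
  intro z
  simp only [Finset.mul_sum, ← Finset.sum_add_distrib]
  exact Finset.sum_le_sum fun i _ => row_min (b i) β (hb i) hβ (u i) (z i) (hu i)
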